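/- arXiv:0907.3381 — 3 statements merged into one kernel-verified Lean document; each statement's English description precedes it below -/
import Mathlib

section
/- Let U be a nonnegative random variable and let v = E[(1+U)^{-1}]. Then for every t ≥ 0, E[e^{-tU}] ≥ (v/2)·e^{-t(2-v)/v}. -/
open MeasureTheory

/-- Lemma (Chatterjee): if `U ≥ 0` and `v = E[(1+U)⁻¹]`, then for every `t ≥ 0`,
`E[e^{-tU}] ≥ (v/2)·e^{-t(2-v)/v}`. -/
theorem stmt_0 {Ω : Type*} [MeasurableSpace Ω] (μ : Measure Ω) [IsProbabilityMeasure μ]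
    (U : Ω → ℝ) (hU : Measurable U) (hUpos : ∀ ω, 0 ≤ U ω)
    (v : ℝ) (hv : v = ∫ ω, (1 + U ω)⁻¹ ∂μ)
    (t : ℝ) (ht : 0 ≤ t) :
    (v / 2) * Real.exp (-t * (2 - v) / v) ≤ ∫ ω, Real.exp (-t * U ω) ∂μ := by
  have hmeas1 : Measurable fun ω => (1 + U ω)⁻¹ := (measurable_const.add hU).inv
  have hb1 : ∀ ω, 0 < (1 + U ω)⁻¹ := fun ω => inv_pos.2 (by linarith [hUpos ω])
  have hb2 : ∀ ω, (1 + U ω)⁻¹ ≤ 1 := fun ω => by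
    have h1 : (1:ℝ) ≤ 1 + U ω := by linarith [hUpos ω]
    have := inv_anti₀ one_pos h1
    simpa using this
  have hint1 : Integrable (fun ω => (1 + U ω)⁻¹) μ := by
    apply Integrable.mono' (integrable_const (1:ℝ)) hmeas1.aestronglyMeasurable
    filter_upwards with ω
    rw [Real.norm_eq_abs, abs_of_pos (hb1 ω)]; exact hb2 ω
  have hv0 : 0 < v := by
    rw [hv, integral_pos_iff_support_of_nonneg (fun ω => (hb1 ω).le) hint1]
    have : Function.support (fun ω => (1 + U ω)⁻¹) = Set.univ := by
      ext ω; simp only [Function.mem_support, Set.mem_univ, iff_true]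
      exact (hb1 ω).ne'
    rw [this]
    simp
  set c := (2 - v) / v with hc
  set A := {ω | U ω ≤ c} with hA
  have hAm : MeasurableSet A := measurableSet_le hU measurable_const
  have hμA : v / 2 ≤ (μ A).toReal := by
    have hle : ∀ ω, (1 + U ω)⁻¹ ≤ A.indicator (fun _ => (1:ℝ)) ω + v / 2 := by
      intro ω
      by_cases h : ω ∈ A
      · rw [Set.indicator_of_mem h]; linarith [hb2 ω]
      · rw [Set.indicator_of_notMem h]
        have hU' : c < U ω := not_le.1 h
        have hcv : c = 2 / v - 1 := by rw [hc, sub_div, div_self hv0.ne']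
        have h2 : 2 / v < 1 + U ω := by linarith
        have h2v : 0 < 2 / v := by positivity
        have := inv_anti₀ h2v h2.le
        have h3 : (2 / v)⁻¹ = v / 2 := by field_simp
        rw [h3] at this
        linarith
    have hintI : Integrable (fun ω => A.indicator (fun _ => (1:ℝ)) ω + v / 2) μ :=
      ((integrable_const (1:ℝ)).indicator hAm).add (integrable_const _)
    have hm := integral_mono hint1 hintI hle
    rw [← hv, integral_add ((integrable_const (1:ℝ)).indicator hAm) (integrable_const _),
        integral_indicator_const _ hAm, integral_const] at hm
    simp only [Measure.real, measure_univ, ENNReal.toReal_one, one_smul, smul_eq_mul, mul_one] at hm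
    linarith
  have hmeas2 : Measurable fun ω => Real.exp (-t * U ω) :=
    (measurable_const.mul hU).exp
  have hintexp : Integrable (fun ω => Real.exp (-t * U ω)) μ := by
    apply Integrable.mono' (integrable_const (1:ℝ)) hmeas2.aestronglyMeasurable
    filter_upwards with ω
    rw [Real.norm_eq_abs, abs_of_pos (Real.exp_pos _)]
    have : -t * U ω ≤ 0 := by
      have := mul_nonneg ht (hUpos ω); nlinarith
    calc Real.exp (-t * U ω) ≤ Real.exp 0 := Real.exp_le_exp.2 this
      _ = 1 := Real.exp_zero
  have hle2 : ∀ ω, A.indicator (fun _ => Real.exp (-t * c)) ω ≤ Real.exp (-t * U ω) := by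
    intro ω
    by_cases h : ω ∈ A
    · rw [Set.indicator_of_mem h]
      apply Real.exp_le_exp.2
      have hUc : U ω ≤ c := h
      nlinarith
    · rw [Set.indicator_of_notMem h]
      exact (Real.exp_pos _).le
  have hm2 := integral_mono ((integrable_const _).indicator hAm) hintexp hle2
  rw [integral_indicator_const _ hAm, smul_eq_mul, Measure.real] at hm2
  have hkey : v / 2 * Real.exp (-t * c) ≤ (μ A).toReal * Real.exp (-t * c) :=
    mul_le_mul_of_nonneg_right hμA (Real.exp_pos _).le
  have hrw : -t * (2 - v) / v = -t * c := by rw [hc]; ring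
  rw [hrw]
  linarith
end

section
/- Let X = (X_1,…,X_n) be a vector of independent random variables, X' an independent copy, and for A ⊆ [n] let X^A agree with X' on A and with X off A. For f : ℝ^n → ℝ with E[f(X)²] < ∞, define Δ_i f^A := f(X^A) − f(X^{A∪{i}}) for i ∉ A. Then for all i ∉ A, E[Δ_i f · Δ_i f^A] ≥ 0, and if A ⊆ B ⊆ [n]∖{i} then E[Δ_i f · Δ_i f^A] ≥ E[Δ_i f · Δ_i f^B]. -/
open MeasureTheory ProbabilityTheory

/-- `perturbedVec X X' A ω` agrees with the independent copy `X'` on coordinates in `A`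
and with `X` elsewhere. -/
def perturbedVec {Ω : Type*} (n : ℕ) (X X' : Fin n → Ω → ℝ) (A : Finset (Fin n))
    (ω : Ω) : Fin n → ℝ :=
  fun i => if i ∈ A then X' i ω else X i ω

set_option linter.unusedSectionVars false

noncomputable section AuxAvg

variable {ι : Type*} [Fintype ι] [DecidableEq ι] (κ : ι → Measure ℝ)
  [∀ i, IsProbabilityMeasure (κ i)]

def updJ (p : ι → Prop) [DecidablePred p] (y : ι → ℝ) (a : Subtype p → ℝ) : ι → ℝ :=
  fun t => if h : p t then a ⟨t, h⟩ else y t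

def avgJ (p : ι → Prop) [DecidablePred p] (G : (ι → ℝ) → ℝ) (y : ι → ℝ) : ℝ :=
  ∫ a, G (updJ p y a) ∂(Measure.pi fun j : Subtype p => κ j.1)


lemma updJ_comm (p q : ι → Prop) [DecidablePred p] [DecidablePred q]
    (hd : ∀ t, ¬ (p t ∧ q t)) (y : ι → ℝ) (a : Subtype p → ℝ) (b : Subtype q → ℝ) :
    updJ p (updJ q y b) a = updJ q (updJ p y a) b := by
  funext t
  by_cases hp : p t <;> by_cases hq : q t
  · exact absurd ⟨hp, hq⟩ (hd t)
  all_goals simp [updJ, hp, hq]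

section basic

variable (p : ι → Prop) [DecidablePred p] {G : (ι → ℝ) → ℝ}

local notation "eJ" => MeasurableEquiv.piEquivPiSubtypeProd (fun _ : ι => ℝ) p

lemma updJ_symm (a a' : Subtype p → ℝ) (z : {t // ¬ p t} → ℝ) :
    updJ p ((eJ).symm (a, z)) a' = (eJ).symm (a', z) := by
  funext t
  simp only [updJ, MeasurableEquiv.piEquivPiSubtypeProd, MeasurableEquiv.symm,
    MeasurableEquiv.coe_mk, Equiv.piEquivPiSubtypeProd_symm_apply]
  by_cases h : p t <;> simp [h]

lemma avgJ_symm (a : Subtype p → ℝ) (z : {t // ¬ p t} → ℝ) :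
    avgJ κ p G ((eJ).symm (a, z)) =
      ∫ a', G ((eJ).symm (a', z)) ∂(Measure.pi fun j : Subtype p => κ j.1) := by
  unfold avgJ
  refine integral_congr_ae (Filter.Eventually.of_forall fun a' => ?_)
  simp only
  rw [updJ_symm]

lemma avgJ_key :
    avgJ κ p G = (fun z : {t // ¬ p t} → ℝ =>
        ∫ a', G ((eJ).symm (a', z)) ∂(Measure.pi fun j : Subtype p => κ j.1)) ∘
      (fun y => ((eJ) y).2) := by
  funext y
  conv_lhs => rw [← (eJ).symm_apply_apply y]
  rw [show (eJ) y = (((eJ) y).1, ((eJ) y).2) from rfl]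
  rw [avgJ_symm]
  rfl

lemma integrable_avgJ (hG : Integrable G (Measure.pi κ)) :
    Integrable (avgJ κ p G) (Measure.pi κ) := by
  have MP := measurePreserving_piEquivPiSubtypeProd κ p
  have hGe : Integrable (G ∘ (eJ).symm)
      ((Measure.pi fun j : Subtype p => κ j.1).prod
        (Measure.pi fun j : {t // ¬ p t} => κ j.1)) :=
    ((MP.symm _).integrable_comp_emb (eJ).symm.measurableEmbedding).mpr hG
  have hk : Integrable (fun z => ∫ a', G ((eJ).symm (a', z))
      ∂(Measure.pi fun j : Subtype p => κ j.1))
      (Measure.pi fun j : {t // ¬ p t} => κ j.1) := hGe.integral_prod_right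
  have hks : Integrable ((fun z => ∫ a', G ((eJ).symm (a', z))
      ∂(Measure.pi fun j : Subtype p => κ j.1)) ∘ Prod.snd)
      ((Measure.pi fun j : Subtype p => κ j.1).prod
        (Measure.pi fun j : {t // ¬ p t} => κ j.1)) := by
    refine (integrable_map_measure ?_ measurable_snd.aemeasurable).mp ?_
    · rw [Measure.map_snd_prod]; simpa using hk.aestronglyMeasurable
    · rw [Measure.map_snd_prod]; simpa using hk
  have := (MP.integrable_comp_emb (eJ).measurableEmbedding).mpr hks
  rwa [avgJ_key]

lemma integral_avgJ (hG : Integrable G (Measure.pi κ)) :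
    ∫ y, avgJ κ p G y ∂(Measure.pi κ) = ∫ y, G y ∂(Measure.pi κ) := by
  have MP := measurePreserving_piEquivPiSubtypeProd κ p
  set π₁ := Measure.pi fun j : Subtype p => κ j.1 with hπ₁
  set π₂ := Measure.pi fun j : {t // ¬ p t} => κ j.1 with hπ₂
  have hGe : Integrable (G ∘ (eJ).symm) (π₁.prod π₂) :=
    ((MP.symm _).integrable_comp_emb (eJ).symm.measurableEmbedding).mpr hG
  have hk : Integrable (fun z => ∫ a', G ((eJ).symm (a', z)) ∂π₁) π₂ :=
    hGe.integral_prod_right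
  have hks : Integrable ((fun z => ∫ a', G ((eJ).symm (a', z)) ∂π₁) ∘ Prod.snd)
      (π₁.prod π₂) := by
    refine (integrable_map_measure ?_ measurable_snd.aemeasurable).mp ?_
    · rw [Measure.map_snd_prod]; simpa using hk.aestronglyMeasurable
    · rw [Measure.map_snd_prod]; simpa using hk
  calc ∫ y, avgJ κ p G y ∂(Measure.pi κ)
      = ∫ q, ((fun z => ∫ a', G ((eJ).symm (a', z)) ∂π₁) ∘ Prod.snd) q ∂(π₁.prod π₂) := by
        rw [avgJ_key (κ := κ)]
        exact MP.integral_comp' (f := eJ)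
          (g := (fun z => ∫ a', G ((eJ).symm (a', z)) ∂π₁) ∘ Prod.snd)
    _ = ∫ a, ∫ z, ∫ a', G ((eJ).symm (a', z)) ∂π₁ ∂π₂ ∂π₁ := integral_prod _ hks
    _ = ∫ z, ∫ a', G ((eJ).symm (a', z)) ∂π₁ ∂π₂ := by
        rw [integral_const]; simp
    _ = ∫ q, G ((eJ).symm q) ∂(π₁.prod π₂) := (integral_prod_symm _ hGe).symm
    _ = ∫ y, G y ∂(Measure.pi κ) := (MP.symm _).integral_comp' _

end basic


section reindex

lemma avgJ_reindex (p₁ p₂ : ι → Prop) [DecidablePred p₁] [DecidablePred p₂]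
    (e : Subtype p₁ ≃ Subtype p₂) (hκ : ∀ j : Subtype p₁, κ j.1 = κ (e j).1)
    {G₁ G₂ : (ι → ℝ) → ℝ} (y : ι → ℝ)
    (h : ∀ a : Subtype p₂ → ℝ, G₁ (updJ p₁ y (a ∘ e)) = G₂ (updJ p₂ y a)) :
    avgJ κ p₁ G₁ y = avgJ κ p₂ G₂ y := by
  have MP := measurePreserving_piCongrLeft (fun j : Subtype p₂ => κ j.1) e
  unfold avgJ
  have hmeq : (Measure.pi fun j : Subtype p₁ => κ j.1)
      = (Measure.pi fun j : Subtype p₁ => κ (e j).1) := by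
    congr 1; funext j; exact hκ j
  rw [hmeq, ← MP.integral_comp' (g := fun a => G₂ (updJ p₂ y a))]
  refine integral_congr_ae (Filter.Eventually.of_forall fun a => ?_)
  simp only
  have := h ((MeasurableEquiv.piCongrLeft (fun _ => ℝ) e) a)
  have hcomp : ((MeasurableEquiv.piCongrLeft (fun _ : Subtype p₂ => ℝ) e) a) ∘ e = a := by
    funext j
    simp only [Function.comp_apply, MeasurableEquiv.coe_piCongrLeft,
      Equiv.piCongrLeft_apply_apply]
  rw [hcomp] at this
  rw [this]

end reindex

section SumSpec

variable {n : ℕ}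

/-- Select the coordinates of a doubled vector according to `T`. -/
def selv (n : ℕ) (T : Finset (Fin n)) (y : Fin n ⊕ Fin n → ℝ) : Fin n → ℝ :=
  fun j => if j ∈ T then y (Sum.inr j) else y (Sum.inl j)

lemma measurable_selv (n : ℕ) (T : Finset (Fin n)) : Measurable (selv n T) := by
  refine measurable_pi_iff.mpr fun j => ?_
  by_cases h : j ∈ T <;> simp only [selv, h, if_true, if_false] <;>
    exact measurable_pi_apply _

/-- `Δᵢf^S`. -/
def DD (n : ℕ) (f : (Fin n → ℝ) → ℝ) (i : Fin n) (S : Finset (Fin n))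
    (y : Fin n ⊕ Fin n → ℝ) : ℝ :=
  f (selv n S y) - f (selv n (insert i S) y)

lemma measurable_DD (n : ℕ) {f : (Fin n → ℝ) → ℝ} (hf : Measurable f) (i : Fin n)
    (S : Finset (Fin n)) : Measurable (DD n f i S) :=
  (hf.comp (measurable_selv n S)).sub (hf.comp (measurable_selv n (insert i S)))

/-- left copies of coordinates in `C`. -/
def pL (C : Finset (Fin n)) : Fin n ⊕ Fin n → Prop := fun t => Sum.elim (· ∈ C) (fun _ => False) t

/-- right copies of coordinates in `S`. -/
def pR (S : Finset (Fin n)) : Fin n ⊕ Fin n → Prop := fun t => Sum.elim (fun _ => False) (· ∈ S) t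

instance (C : Finset (Fin n)) : DecidablePred (pL C) := fun t => by
  cases t with
  | inl j => exact inferInstanceAs (Decidable (j ∈ C))
  | inr j => exact inferInstanceAs (Decidable False)

instance (S : Finset (Fin n)) : DecidablePred (pR S) := fun t => by
  cases t with
  | inl j => exact inferInstanceAs (Decidable False)
  | inr j => exact inferInstanceAs (Decidable (j ∈ S))

lemma pL_pR_disjoint (C S : Finset (Fin n)) : ∀ t, ¬ (pL C t ∧ pR S t) := by
  rintro (j | j) ⟨h1, h2⟩
  · exact h2
  · exact h1

lemma selv_updJ (T : Finset (Fin n)) (p : Fin n ⊕ Fin n → Prop) [DecidablePred p]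
    (h : ∀ j : Fin n, ¬ p (if j ∈ T then Sum.inr j else Sum.inl j))
    (y : Fin n ⊕ Fin n → ℝ) (a : Subtype p → ℝ) :
    selv n T (updJ p y a) = selv n T y := by
  funext j
  have hj := h j
  by_cases hT : j ∈ T
  · rw [if_pos hT] at hj
    simp [selv, updJ, hT, hj]
  · rw [if_neg hT] at hj
    simp [selv, updJ, hT, hj]

lemma selv_updJ_pL (T C : Finset (Fin n)) (hCT : C ⊆ T) (y : Fin n ⊕ Fin n → ℝ)
    (a : Subtype (pL C) → ℝ) : selv n T (updJ (pL C) y a) = selv n T y := by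
  refine selv_updJ T _ (fun j => ?_) y a
  by_cases hT : j ∈ T
  · rw [if_pos hT]; exact fun h => h
  · rw [if_neg hT]; exact fun h => hT (hCT h)

lemma selv_updJ_pR (T S : Finset (Fin n)) (hTS : ∀ j ∈ T, j ∉ S) (y : Fin n ⊕ Fin n → ℝ)
    (a : Subtype (pR S) → ℝ) : selv n T (updJ (pR S) y a) = selv n T y := by
  refine selv_updJ T _ (fun j => ?_) y a
  by_cases hT : j ∈ T
  · rw [if_pos hT]; exact hTS j hT
  · rw [if_neg hT]; exact fun h => h

lemma DD_updJ_pL (n : ℕ) (f : (Fin n → ℝ) → ℝ) (i : Fin n) {C S : Finset (Fin n)}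
    (hCS : C ⊆ S) (y : Fin n ⊕ Fin n → ℝ) (a : Subtype (pL C) → ℝ) :
    DD n f i S (updJ (pL C) y a) = DD n f i S y := by
  unfold DD
  rw [selv_updJ_pL S C hCS, selv_updJ_pL (insert i S) C (hCS.trans (Finset.subset_insert i S))]

lemma DD_empty_updJ_pR (n : ℕ) (f : (Fin n → ℝ) → ℝ) (i : Fin n) {S : Finset (Fin n)}
    (hiS : i ∉ S) (y : Fin n ⊕ Fin n → ℝ) (a : Subtype (pR S) → ℝ) :
    DD n f i ∅ (updJ (pR S) y a) = DD n f i ∅ y := by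
  unfold DD
  rw [selv_updJ_pR ∅ S (fun j hj => absurd hj (Finset.notMem_empty j)),
    selv_updJ_pR (insert i ∅) S (fun j hj => ?_)]
  simp only [Finset.mem_insert, Finset.notMem_empty, or_false] at hj
  subst hj; exact hiS

/-- The equivalence between left and right copies of `S`. -/
def eSw (S : Finset (Fin n)) : Subtype (pL S) ≃ Subtype (pR S) where
  toFun x := ⟨Sum.elim (fun j => Sum.inr j) (fun j => Sum.inl j) x.1, by
    obtain ⟨t, ht⟩ := x
    cases t with
    | inl j => exact ht
    | inr j => exact ht.elim⟩
  invFun x := ⟨Sum.elim (fun j => Sum.inr j) (fun j => Sum.inl j) x.1, by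
    obtain ⟨t, ht⟩ := x
    cases t with
    | inl j => exact ht.elim
    | inr j => exact ht⟩
  left_inv x := by
    obtain ⟨t, ht⟩ := x
    cases t with
    | inl j => rfl
    | inr j => exact ht.elim
  right_inv x := by
    obtain ⟨t, ht⟩ := x
    cases t with
    | inl j => exact ht.elim
    | inr j => rfl

lemma selv_swap_left (S : Finset (Fin n)) (y : Fin n ⊕ Fin n → ℝ)
    (a : Subtype (pR S) → ℝ) :
    selv n ∅ (updJ (pL S) y (a ∘ eSw S)) = selv n S (updJ (pR S) y a) := by
  funext j
  by_cases hj : j ∈ S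
  · simp [selv, updJ, hj, pL, pR, eSw, Finset.notMem_empty]
  · simp [selv, updJ, hj, pL, pR, Finset.notMem_empty]

lemma selv_swap_right (S : Finset (Fin n)) (i : Fin n) (hiS : i ∉ S)
    (y : Fin n ⊕ Fin n → ℝ) (a : Subtype (pR S) → ℝ) :
    selv n (insert i ∅) (updJ (pL S) y (a ∘ eSw S))
      = selv n (insert i S) (updJ (pR S) y a) := by
  funext j
  by_cases hji : j = i
  · subst hji
    simp [selv, updJ, hiS, pL, pR]
  · by_cases hj : j ∈ S
    · simp [selv, updJ, hj, hji, pL, pR, eSw, Finset.mem_insert]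
    · simp [selv, updJ, hj, hji, pL, pR, Finset.mem_insert]

lemma DD_swap (n : ℕ) (f : (Fin n → ℝ) → ℝ) (i : Fin n) {S : Finset (Fin n)} (hiS : i ∉ S)
    (y : Fin n ⊕ Fin n → ℝ) (a : Subtype (pR S) → ℝ) :
    DD n f i ∅ (updJ (pL S) y (a ∘ eSw S)) = DD n f i S (updJ (pR S) y a) := by
  unfold DD
  rw [selv_swap_left, selv_swap_right S i hiS]

/-- The involution swapping left/right copies of the coordinates in `T`. -/
def swT (n : ℕ) (T : Finset (Fin n)) : (Fin n ⊕ Fin n) ≃ (Fin n ⊕ Fin n) where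
  toFun := Sum.elim (fun j => if j ∈ T then Sum.inr j else Sum.inl j)
    (fun j => if j ∈ T then Sum.inl j else Sum.inr j)
  invFun := Sum.elim (fun j => if j ∈ T then Sum.inr j else Sum.inl j)
    (fun j => if j ∈ T then Sum.inl j else Sum.inr j)
  left_inv t := by cases t with
    | inl j => by_cases h : j ∈ T <;> simp [h]
    | inr j => by_cases h : j ∈ T <;> simp [h]
  right_inv t := by cases t with
    | inl j => by_cases h : j ∈ T <;> simp [h]
    | inr j => by_cases h : j ∈ T <;> simp [h]

end SumSpec

end AuxAvg

/-- The doubled family of marginal laws. -/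
noncomputable def kap {Ω : Type*} [MeasurableSpace Ω] (μ : MeasureTheory.Measure Ω) (n : ℕ)
    (X : Fin n → Ω → ℝ) : Fin n ⊕ Fin n → MeasureTheory.Measure ℝ :=
  fun t => Sum.elim (fun j => μ.map (X j)) (fun j => μ.map (X j)) t


/-- For independent `X_1,…,X_n` with independent copy `X'`, `f` square integrable, and
`Δ_i f^A = f(X^A) − f(X^{A∪{i}})` (for `i ∉ A`): `E[Δ_i f · Δ_i f^A] ≥ 0`, and this
quantity is nonincreasing in `A`: if `A ⊆ B ⊆ [n]∖{i}` then
`E[Δ_i f · Δ_i f^B] ≤ E[Δ_i f · Δ_i f^A]`. -/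
theorem stmt_16 {Ω : Type*} [MeasurableSpace Ω] (μ : Measure Ω) [IsProbabilityMeasure μ]
    (n : ℕ) (X X' : Fin n → Ω → ℝ)
    (hmX : ∀ i, Measurable (X i)) (hmX' : ∀ i, Measurable (X' i))
    (hindep : iIndepFun (m := fun _ : Fin n ⊕ Fin n => (inferInstance : MeasurableSpace ℝ))
      (Sum.elim X X') μ)
    (hident : ∀ i, IdentDistrib (X i) (X' i) μ μ)
    (f : (Fin n → ℝ) → ℝ) (hf : Measurable f)
    (hL2 : MemLp (fun ω => f (fun i => X i ω)) 2 μ) :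
    ∀ (i : Fin n) (A : Finset (Fin n)), i ∉ A →
      (0 ≤ ∫ ω, (f (perturbedVec n X X' ∅ ω) - f (perturbedVec n X X' {i} ω))
            * (f (perturbedVec n X X' A ω) - f (perturbedVec n X X' (insert i A) ω)) ∂μ) ∧
      ∀ B : Finset (Fin n), A ⊆ B → i ∉ B →
        (∫ ω, (f (perturbedVec n X X' ∅ ω) - f (perturbedVec n X X' {i} ω))
            * (f (perturbedVec n X X' B ω) - f (perturbedVec n X X' (insert i B) ω)) ∂μ)
          ≤ ∫ ω, (f (perturbedVec n X X' ∅ ω) - f (perturbedVec n X X' {i} ω))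
              * (f (perturbedVec n X X' A ω) - f (perturbedVec n X X' (insert i A) ω)) ∂μ := by
  intro i A hiA
  classical
  have hmY : ∀ t, Measurable (Sum.elim X X' t) := by
    rintro (j | j)
    · exact hmX j
    · exact hmX' j
  set XX : Ω → Fin n ⊕ Fin n → ℝ := fun ω t => Sum.elim X X' t ω with hXXdef
  have hmXX : Measurable XX := measurable_pi_iff.mpr hmY
  set κ : Fin n ⊕ Fin n → Measure ℝ := kap μ n X with hκdef
  haveI hκprob : ∀ t, IsProbabilityMeasure (κ t) := by
    rintro (j | j) <;> exact Measure.isProbabilityMeasure_map (hmX _).aemeasurable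
  have hmap : μ.map XX = Measure.pi κ := by
    refine (Measure.pi_eq fun s hs => ?_).symm
    rw [Measure.map_apply hmXX (MeasurableSet.univ_pi hs)]
    have hpre : XX ⁻¹' Set.univ.pi s
        = ⋂ t ∈ (Finset.univ : Finset (Fin n ⊕ Fin n)), Sum.elim X X' t ⁻¹' s t := by
      ext ω
      simp [hXXdef, Set.mem_univ_pi]
    rw [hpre, hindep.measure_inter_preimage_eq_mul Finset.univ (fun t _ => hs t)]
    refine Finset.prod_congr rfl fun t _ => ?_
    cases t with
    | inl j =>
        rw [show κ (Sum.inl j) = μ.map (X j) from rfl, Measure.map_apply (hmX j) (hs _)]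
        rfl
    | inr j =>
        rw [show κ (Sum.inr j) = μ.map (X j) from rfl, (hident j).map_eq,
          Measure.map_apply (hmX' j) (hs _)]
        rfl
  -- square integrability of all the selected compositions
  have hsel2 : ∀ T : Finset (Fin n), MemLp (fun y => f (selv n T y)) 2 (Measure.pi κ) := by
    intro T
    have base : MemLp (fun y => f (selv n ∅ y)) 2 (Measure.pi κ) := by
      rw [← hmap]
      have hgm : AEStronglyMeasurable (fun y => f (selv n ∅ y)) (Measure.map XX μ) :=
        (hf.comp (measurable_selv n ∅)).aestronglyMeasurable
      rw [memLp_map_measure_iff hgm hmXX.aemeasurable]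
      have hfe : (fun y => f (selv n ∅ y)) ∘ XX = fun ω => f (fun j => X j ω) := by
        funext ω
        show f (selv n ∅ (XX ω)) = f fun j => X j ω
        congr 1
      rw [hfe]
      exact hL2
    have hκswap : (fun t => κ ((swT n T) t)) = κ := by
      funext t
      cases t with
      | inl j => by_cases h : j ∈ T <;> simp [swT, h] <;> rfl
      | inr j => by_cases h : j ∈ T <;> simp [swT, h] <;> rfl
    have MP : MeasurePreserving (MeasurableEquiv.piCongrLeft (fun _ => ℝ) (swT n T))
        (Measure.pi κ) (Measure.pi κ) := by
      have h := measurePreserving_piCongrLeft κ (swT n T)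
      rwa [hκswap] at h
    have hcomp : (fun y => f (selv n T y))
        = (fun y => f (selv n ∅ y)) ∘ (MeasurableEquiv.piCongrLeft (fun _ => ℝ) (swT n T)) := by
      funext y
      simp only [Function.comp_apply]
      congr 1
      funext j
      by_cases hj : j ∈ T
      · have h1 : (Sum.inl j : Fin n ⊕ Fin n) = (swT n T) (Sum.inr j) := by simp [swT, hj]
        simp only [selv, hj, if_true, Finset.notMem_empty, if_false]
        rw [h1, MeasurableEquiv.piCongrLeft_apply_apply]
      · have h1 : (Sum.inl j : Fin n ⊕ Fin n) = (swT n T) (Sum.inl j) := by simp [swT, hj]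
        simp only [selv, hj, if_false, Finset.notMem_empty]
        rw [h1, MeasurableEquiv.piCongrLeft_apply_apply]
        exact congrArg y h1.symm
    rw [hcomp]
    exact base.comp_measurePreserving MP
  have hD2 : ∀ S, MemLp (DD n f i S) 2 (Measure.pi κ) := fun S =>
    (hsel2 S).sub (hsel2 (insert i S))
  have hmul : ∀ S T : Finset (Fin n),
      Integrable (fun y => DD n f i S y * DD n f i T y) (Measure.pi κ) := by
    intro S T
    have h : MemLp ((DD n f i S) • (DD n f i T)) 1 (Measure.pi κ) :=
      (hD2 T).smul (hD2 S) (hpqr := ⟨by rw [ENNReal.inv_two_add_inv_two, inv_one]⟩)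
    rw [memLp_one_iff_integrable] at h
    exact h
  -- the conditional averages
  set Φ : Finset (Fin n) → (Fin n ⊕ Fin n → ℝ) → ℝ :=
    fun C => avgJ κ (pL C) (DD n f i ∅) with hΦdef
  have chain : ∀ C S : Finset (Fin n), C ⊆ S → i ∉ S →
      (∫ y, DD n f i ∅ y * DD n f i S y ∂(Measure.pi κ)
        = ∫ y, Φ C y * Φ S y ∂(Measure.pi κ))
      ∧ Integrable (fun y => Φ C y * Φ S y) (Measure.pi κ) := by
    intro C S hCS hiS
    have h1 := hmul ∅ S
    have eq1 : ∀ y, avgJ κ (pL C) (fun z => DD n f i ∅ z * DD n f i S z) y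
        = Φ C y * DD n f i S y := by
      intro y
      rw [hΦdef]
      simp only
      unfold avgJ
      rw [← integral_mul_const]
      refine integral_congr_ae (Filter.Eventually.of_forall fun a => ?_)
      simp only
      rw [DD_updJ_pL n f i hCS]
    have i1 : Integrable (fun y => Φ C y * DD n f i S y) (Measure.pi κ) := by
      rw [show (fun y => Φ C y * DD n f i S y)
        = avgJ κ (pL C) (fun z => DD n f i ∅ z * DD n f i S z) from (funext eq1).symm]
      exact integrable_avgJ κ _ h1
    have eq3 : ∀ y, avgJ κ (pR S) (DD n f i S) y = Φ S y := by
      intro y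
      rw [hΦdef]
      simp only
      refine (avgJ_reindex κ (pL S) (pR S) (eSw S) ?_ y (fun a => DD_swap n f i hiS y a)).symm
      rintro ⟨t | t, ht⟩ <;> rfl
    have eq2 : ∀ y, avgJ κ (pR S) (fun z => Φ C z * DD n f i S z) y
        = Φ C y * Φ S y := by
      intro y
      rw [← eq3 y]
      unfold avgJ
      rw [← integral_const_mul]
      refine integral_congr_ae (Filter.Eventually.of_forall fun a => ?_)
      simp only
      congr 1
      rw [hΦdef]
      simp only
      unfold avgJ
      refine integral_congr_ae (Filter.Eventually.of_forall fun b => ?_)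
      show DD n f i ∅ (updJ (pL C) (updJ (pR S) y a) b) = DD n f i ∅ (updJ (pL C) y b)
      rw [updJ_comm (pL C) (pR S) (pL_pR_disjoint C S) y b a]
      exact DD_empty_updJ_pR n f i hiS _ a
    have i2 : Integrable (fun y => Φ C y * Φ S y) (Measure.pi κ) := by
      rw [show (fun y => Φ C y * Φ S y)
        = avgJ κ (pR S) (fun z => Φ C z * DD n f i S z) from (funext eq2).symm]
      exact integrable_avgJ κ _ i1
    refine ⟨?_, i2⟩
    calc ∫ y, DD n f i ∅ y * DD n f i S y ∂(Measure.pi κ)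
        = ∫ y, avgJ κ (pL C) (fun z => DD n f i ∅ z * DD n f i S z) y ∂(Measure.pi κ) :=
          (integral_avgJ κ _ h1).symm
      _ = ∫ y, Φ C y * DD n f i S y ∂(Measure.pi κ) :=
          integral_congr_ae (Filter.Eventually.of_forall fun y => eq1 y)
      _ = ∫ y, avgJ κ (pR S) (fun z => Φ C z * DD n f i S z) y ∂(Measure.pi κ) :=
          (integral_avgJ κ _ i1).symm
      _ = ∫ y, Φ C y * Φ S y ∂(Measure.pi κ) :=
          integral_congr_ae (Filter.Eventually.of_forall fun y => eq2 y)
  -- conversion of the goal integrals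
  have hconv : ∀ S : Finset (Fin n),
      ∫ ω, (f (perturbedVec n X X' ∅ ω) - f (perturbedVec n X X' {i} ω))
        * (f (perturbedVec n X X' S ω) - f (perturbedVec n X X' (insert i S) ω)) ∂μ
      = ∫ y, DD n f i ∅ y * DD n f i S y ∂(Measure.pi κ) := by
    intro S
    rw [← hmap, integral_map hmXX.aemeasurable (f := fun y => DD n f i ∅ y * DD n f i S y)
      ((measurable_DD n hf i ∅).mul (measurable_DD n hf i S)).aestronglyMeasurable]
    refine integral_congr_ae (Filter.Eventually.of_forall fun ω => ?_)
    have hsel : ∀ T : Finset (Fin n), selv n T (XX ω) = perturbedVec n X X' T ω := by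
      intro T
      funext j
      by_cases hj : j ∈ T <;> simp [selv, perturbedVec, hj, hXXdef]
    have hins : (insert i ∅ : Finset (Fin n)) = {i} := by simp
    simp only [DD, hsel, hins]
  obtain ⟨eA, iA⟩ := chain A A (subset_refl A) hiA
  constructor
  · rw [hconv A, eA]
    exact integral_nonneg fun y => mul_self_nonneg _
  · intro B hAB hiB
    obtain ⟨eAB, iAB⟩ := chain A B hAB hiB
    obtain ⟨eB, iB⟩ := chain B B (subset_refl B) hiB
    rw [hconv A, hconv B, eA, eAB]
    have hBB : ∫ y, Φ B y * Φ B y ∂(Measure.pi κ) = ∫ y, Φ A y * Φ B y ∂(Measure.pi κ) :=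
      eB.symm.trans eAB
    have key : 0 ≤ ∫ y, (Φ A y - Φ B y) * (Φ A y - Φ B y) ∂(Measure.pi κ) :=
      integral_nonneg fun y => mul_self_nonneg _
    have expand : ∫ y, (Φ A y - Φ B y) * (Φ A y - Φ B y) ∂(Measure.pi κ)
        = ∫ y, Φ A y * Φ A y ∂(Measure.pi κ)
          - 2 * ∫ y, Φ A y * Φ B y ∂(Measure.pi κ)
          + ∫ y, Φ B y * Φ B y ∂(Measure.pi κ) := by
      have hpt : ∀ y, (Φ A y - Φ B y) * (Φ A y - Φ B y)
          = Φ A y * Φ A y - 2 * (Φ A y * Φ B y) + Φ B y * Φ B y := fun y => by ring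
      have i2AB : Integrable (fun y => 2 * (Φ A y * Φ B y)) (Measure.pi κ) :=
        iAB.const_mul 2
      have isub : Integrable (fun y => Φ A y * Φ A y - 2 * (Φ A y * Φ B y)) (Measure.pi κ) :=
        iA.sub i2AB
      rw [integral_congr_ae (Filter.Eventually.of_forall hpt),
        integral_add isub iB, integral_sub iA i2AB, integral_const_mul]
    rw [expand, hBB] at key
    linarith
end

section
/- With the notation above (X i.i.d.-perturbation setup), define T_k := Σ_{i=1}^n (1/C(n−1,k)) Σ_{A ⊆ [n]∖{i}, |A|=k} E[Δ_i f · Δ_i f^A] for 0 ≤ k ≤ n−1. Then Var(f(X)) = (1/(2n)) Σ_{k=0}^{n−1} T_k. -/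
open MeasureTheory ProbabilityTheory
open scoped ENNReal

/- ### Combinatorial lemmas -/

lemma aux_pcard_erase {n : ℕ} (k : ℕ) (i : Fin n) :
    Finset.powersetCard k (Finset.univ.erase i) =
      (Finset.powersetCard k (Finset.univ : Finset (Fin n))).filter (fun A => i ∉ A) := by
  ext A
  simp only [Finset.mem_powersetCard, Finset.subset_erase, Finset.mem_filter]
  tauto

lemma sum_part1 {n k : ℕ} (h : Finset (Fin n) → ℝ) :
    ∑ i : Fin n, ∑ A ∈ Finset.powersetCard k (Finset.univ.erase i), h A
      = ∑ B ∈ Finset.powersetCard k (Finset.univ : Finset (Fin n)), ((n - k : ℕ) : ℝ) * h B := by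
  simp_rw [aux_pcard_erase, Finset.sum_filter]
  rw [Finset.sum_comm]
  refine Finset.sum_congr rfl fun B hB => ?_
  rw [Finset.sum_ite, Finset.sum_const, Finset.sum_const_zero, add_zero]
  have : Finset.univ.filter (fun i => i ∉ B) = Bᶜ := by
    ext j; simp
  rw [this, Finset.card_compl, nsmul_eq_mul]
  simp only [Finset.mem_powersetCard] at hB
  rw [hB.2, Fintype.card_fin]

lemma sum_part2 {n k : ℕ} (h : Finset (Fin n) → ℝ) :
    ∑ i : Fin n, ∑ A ∈ Finset.powersetCard k (Finset.univ.erase i), h (insert i A)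
      = ∑ B ∈ Finset.powersetCard (k+1) (Finset.univ : Finset (Fin n)), ((k+1 : ℕ) : ℝ) * h B := by
  have step : ∀ i : Fin n, ∑ A ∈ Finset.powersetCard k (Finset.univ.erase i), h (insert i A)
      = ∑ B ∈ (Finset.powersetCard (k+1) (Finset.univ : Finset (Fin n))).filter
          (fun B => i ∈ B), h B := by
    intro i
    refine Finset.sum_nbij' (fun A => insert i A) (fun B => B.erase i) ?_ ?_ ?_ ?_ ?_
    · intro A hA
      simp only [Finset.mem_powersetCard, Finset.subset_erase] at hA
      simp only [Finset.mem_filter, Finset.mem_powersetCard]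
      refine ⟨⟨Finset.subset_univ _, ?_⟩, Finset.mem_insert_self _ _⟩
      rw [Finset.card_insert_of_notMem hA.1.2, hA.2]
    · intro B hB
      simp only [Finset.mem_filter, Finset.mem_powersetCard] at hB
      simp only [Finset.mem_powersetCard, Finset.subset_erase]
      refine ⟨⟨Finset.subset_univ _, Finset.notMem_erase _ _⟩, ?_⟩
      rw [Finset.card_erase_of_mem hB.2, hB.1.2]
      omega
    · intro A hA
      simp only [Finset.mem_powersetCard, Finset.subset_erase] at hA
      exact Finset.erase_insert hA.1.2
    · intro B hB
      simp only [Finset.mem_filter] at hB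
      exact Finset.insert_erase hB.2
    · intro A hA; rfl
  simp_rw [step, Finset.sum_filter]
  rw [Finset.sum_comm]
  refine Finset.sum_congr rfl fun B hB => ?_
  rw [Finset.sum_ite, Finset.sum_const, Finset.sum_const_zero, add_zero]
  have : Finset.univ.filter (fun i => i ∈ B) = B := by ext j; simp
  rw [this, nsmul_eq_mul]
  congr 2
  simp only [Finset.mem_powersetCard] at hB
  exact hB.2

lemma choose_inv_mul₁ {n k : ℕ} (hk : k < n) :
    ((Nat.choose (n-1) k : ℝ))⁻¹ * ((n - k : ℕ) : ℝ)
      = (Nat.factorial k * Nat.factorial (n - k) : ℝ) / (Nat.factorial (n-1)) := by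
  have h1 : Nat.choose (n-1) k * Nat.factorial k * Nat.factorial (n-1-k)
      = Nat.factorial (n-1) := Nat.choose_mul_factorial_mul_factorial (by omega)
  have h2 : Nat.factorial (n - k) = (n - k) * Nat.factorial (n - 1 - k) := by
    have hnk : n - k = (n - 1 - k) + 1 := by omega
    rw [hnk, Nat.factorial_succ]
  have hC : (Nat.choose (n-1) k : ℝ) ≠ 0 :=
    Nat.cast_ne_zero.2 (Nat.choose_pos (by omega)).ne'
  have hF : (Nat.factorial (n-1) : ℝ) ≠ 0 := Nat.cast_ne_zero.2 (Nat.factorial_ne_zero _)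
  have key : (n - k) * Nat.factorial (n-1)
      = Nat.factorial k * Nat.factorial (n-k) * Nat.choose (n-1) k := by
    rw [h2, ← h1]; ring
  rw [eq_div_iff hF, inv_mul_eq_div, div_mul_eq_mul_div, div_eq_iff hC]
  exact_mod_cast key

lemma choose_inv_mul₂ {n k : ℕ} (hk : k < n) :
    ((Nat.choose (n-1) k : ℝ))⁻¹ * ((k+1 : ℕ) : ℝ)
      = (Nat.factorial (k+1) * Nat.factorial (n - (k+1)) : ℝ) / (Nat.factorial (n-1)) := by
  have h1 : Nat.choose (n-1) k * Nat.factorial k * Nat.factorial (n-1-k)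
      = Nat.factorial (n-1) := Nat.choose_mul_factorial_mul_factorial (by omega)
  have hC : (Nat.choose (n-1) k : ℝ) ≠ 0 :=
    Nat.cast_ne_zero.2 (Nat.choose_pos (by omega)).ne'
  have hF : (Nat.factorial (n-1) : ℝ) ≠ 0 := Nat.cast_ne_zero.2 (Nat.factorial_ne_zero _)
  have key : (k+1) * Nat.factorial (n-1)
      = Nat.factorial (k+1) * Nat.factorial (n-(k+1)) * Nat.choose (n-1) k := by
    have h3 : n - (k+1) = n - 1 - k := by omega
    rw [h3, Nat.factorial_succ, ← h1]; ring
  rw [eq_div_iff hF, inv_mul_eq_div, div_mul_eq_mul_div, div_eq_iff hC]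
  exact_mod_cast key

lemma telescope {n : ℕ} (hn : 0 < n) (h : Finset (Fin n) → ℝ) :
    ∑ k ∈ Finset.range n, ∑ i : Fin n, ((Nat.choose (n-1) k : ℝ))⁻¹ *
        ∑ A ∈ Finset.powersetCard k (Finset.univ.erase i), (h A - h (insert i A))
      = n * (h ∅ - h Finset.univ) := by
  set a : ℕ → ℝ := fun k =>
    (Nat.factorial k * Nat.factorial (n - k) : ℝ) / (Nat.factorial (n-1)) with ha
  set U : ℕ → ℝ :=
    fun k => ∑ B ∈ Finset.powersetCard k (Finset.univ : Finset (Fin n)), h B with hU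
  have hterm : ∀ k ∈ Finset.range n,
      (∑ i : Fin n, ((Nat.choose (n-1) k:ℝ))⁻¹ *
        ∑ A ∈ Finset.powersetCard k (Finset.univ.erase i), (h A - h (insert i A)))
      = a k * U k - a (k+1) * U (k+1) := by
    intro k hk
    rw [Finset.mem_range] at hk
    rw [← Finset.mul_sum]
    have expand : ∑ i : Fin n,
        ∑ A ∈ Finset.powersetCard k (Finset.univ.erase i), (h A - h (insert i A))
        = ((n - k : ℕ) : ℝ) * U k - ((k+1 : ℕ) : ℝ) * U (k+1) := by
      simp_rw [Finset.sum_sub_distrib]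
      rw [sum_part1 h, sum_part2 h, hU]
      rw [← Finset.mul_sum, ← Finset.mul_sum]
    rw [expand, mul_sub, ← mul_assoc, ← mul_assoc, choose_inv_mul₁ hk, choose_inv_mul₂ hk, ha]
  rw [Finset.sum_congr rfl hterm, Finset.sum_range_sub' (fun k => a k * U k)]
  have hU0 : U 0 = h ∅ := by simp [hU]
  have hUn : U n = h Finset.univ := by
    have : Finset.powersetCard n (Finset.univ : Finset (Fin n)) = {Finset.univ} := by
      ext B
      simp only [Finset.mem_powersetCard, Finset.mem_singleton, Finset.subset_univ, true_and]
      constructor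
      · intro hB; exact Finset.eq_univ_of_card B (by simp [hB])
      · rintro rfl; simp
    rw [hU]
    simp only [this, Finset.sum_singleton]
  have ha0 : a 0 = n := by
    rw [ha]
    simp only [Nat.factorial_zero, Nat.sub_zero, Nat.cast_one, one_mul]
    have : Nat.factorial n = n * Nat.factorial (n-1) := by
      conv_lhs => rw [show n = (n-1)+1 by omega]
      rw [Nat.factorial_succ, show n - 1 + 1 = n by omega]
    rw [this]
    push_cast
    field_simp
  have han : a n = n := by
    rw [ha]
    simp only [Nat.sub_self, Nat.factorial_zero, Nat.cast_one, mul_one]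
    have : Nat.factorial n = n * Nat.factorial (n-1) := by
      conv_lhs => rw [show n = (n-1)+1 by omega]
      rw [Nat.factorial_succ, show n - 1 + 1 = n by omega]
    rw [this]
    push_cast
    field_simp
  rw [hU0, hUn, ha0, han]
  ring

/- ### Selection map and coordinate swaps -/

/-- `sel n A y` builds an `n`-vector out of `y : (Fin n ⊕ Fin n) → ℝ`, taking the `inr`
("primed") coordinate on `A` and the `inl` coordinate off `A`. -/
def sel (n : ℕ) (A : Finset (Fin n)) (y : (Fin n ⊕ Fin n) → ℝ) : Fin n → ℝ :=
  fun i => if i ∈ A then y (.inr i) else y (.inl i)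

/-- The involution of `Fin n ⊕ Fin n` swapping `inl i ↔ inr i` exactly for `i ∈ C`. -/
def swapFn (n : ℕ) (C : Finset (Fin n)) : (Fin n ⊕ Fin n) → (Fin n ⊕ Fin n)
  | .inl i => if i ∈ C then .inr i else .inl i
  | .inr i => if i ∈ C then .inl i else .inr i

lemma swapFn_invol (n : ℕ) (C : Finset (Fin n)) (j : Fin n ⊕ Fin n) :
    swapFn n C (swapFn n C j) = j := by
  cases j with
  | inl i => by_cases hi : i ∈ C <;> simp [swapFn, hi]
  | inr i => by_cases hi : i ∈ C <;> simp [swapFn, hi]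

/-- `swapFn` as an `Equiv`. -/
def swapEquiv (n : ℕ) (C : Finset (Fin n)) : (Fin n ⊕ Fin n) ≃ (Fin n ⊕ Fin n) where
  toFun := swapFn n C
  invFun := swapFn n C
  left_inv := swapFn_invol n C
  right_inv := swapFn_invol n C

lemma measurable_sel (n : ℕ) (A : Finset (Fin n)) : Measurable (sel n A) := by
  apply measurable_pi_lambda
  intro i
  by_cases hi : i ∈ A
  · simp only [sel, if_pos hi]; exact measurable_pi_apply _
  · simp only [sel, if_neg hi]; exact measurable_pi_apply _

lemma sel_swapFn {n : ℕ} (C B : Finset (Fin n)) (y : (Fin n ⊕ Fin n) → ℝ) :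
    sel n B (fun j => y (swapFn n C j)) = sel n (symmDiff B C) y := by
  funext i
  by_cases hB : i ∈ B <;> by_cases hC : i ∈ C <;>
    simp [sel, swapFn, hB, hC, Finset.mem_symmDiff]

/-- Variance decomposition: with
`T_k = Σ_i C(n−1,k)⁻¹ Σ_{A ⊆ [n]∖{i}, |A| = k} E[Δ_i f · Δ_i f^A]`,
one has `Var(f(X)) = (1/(2n)) Σ_{k=0}^{n−1} T_k`. -/
theorem stmt_17 {Ω : Type*} [MeasurableSpace Ω] (μ : Measure Ω) [IsProbabilityMeasure μ]
    (n : ℕ) (hn : 0 < n) (X X' : Fin n → Ω → ℝ)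
    (hmX : ∀ i, Measurable (X i)) (hmX' : ∀ i, Measurable (X' i))
    (hindep : iIndepFun (Sum.elim X X') μ)
    (hident : ∀ i, IdentDistrib (X i) (X' i) μ μ)
    (f : (Fin n → ℝ) → ℝ) (hf : Measurable f)
    (hL2 : MemLp (fun ω => f (fun i => X i ω)) 2 μ) :
    (∫ ω, (f (fun i => X i ω)) ^ 2 ∂μ) - (∫ ω, f (fun i => X i ω) ∂μ) ^ 2
      = (1 / (2 * n)) * ∑ k ∈ Finset.range n, ∑ i : Fin n,
          ((Nat.choose (n - 1) k : ℝ))⁻¹ *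
            ∑ A ∈ Finset.powersetCard k (Finset.univ.erase i),
              ∫ ω, (f (perturbedVec n X X' ∅ ω) - f (perturbedVec n X X' {i} ω))
                * (f (perturbedVec n X X' A ω) - f (perturbedVec n X X' (insert i A) ω)) ∂μ := by
  classical
  -- the big vector and product measure
  set bigvec : Ω → (Fin n ⊕ Fin n) → ℝ := fun ω j => Sum.elim X X' j ω with hbigvec
  have hmelim : ∀ j, Measurable (Sum.elim X X' j) := by
    rintro (i | i)
    · exact hmX i
    · exact hmX' i
  have hmbig : Measurable bigvec := measurable_pi_lambda _ hmelim
  set ν : (Fin n ⊕ Fin n) → Measure ℝ := fun j => μ.map (Sum.elim X X' j) with hν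
  haveI hprob : ∀ j, IsProbabilityMeasure (ν j) :=
    fun j => Measure.isProbabilityMeasure_map (hmelim j).aemeasurable
  haveI : ∀ j, SigmaFinite (ν j) := fun j => by infer_instance
  set π : Measure ((Fin n ⊕ Fin n) → ℝ) := Measure.pi ν with hπ
  haveI : IsProbabilityMeasure π := by rw [hπ]; infer_instance
  -- μ.map bigvec = π
  have hmap : μ.map bigvec = π := by
    rw [hπ]
    refine (Measure.pi_eq fun s hs => ?_).symm
    rw [Measure.map_apply hmbig (MeasurableSet.univ_pi hs)]
    have hpre : bigvec ⁻¹' (Set.univ.pi s) = ⋂ j, Sum.elim X X' j ⁻¹' s j := by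
      ext ω; simp [hbigvec, Set.mem_pi]
    rw [hpre, hindep.meas_iInter (fun j => ⟨s j, hs j, rfl⟩)]
    exact Finset.prod_congr rfl fun j _ => (Measure.map_apply (hmelim j) (hs j)).symm
  -- invariance of ν under the swaps
  have hνswap : ∀ (C : Finset (Fin n)) j, ν (swapFn n C j) = ν j := by
    rintro C (i | i)
    · by_cases hi : i ∈ C
      · simp only [swapFn, if_pos hi, hν, Sum.elim_inl, Sum.elim_inr]
        exact ((hident i).map_eq).symm
      · simp [swapFn, hi]
    · by_cases hi : i ∈ C
      · simp only [swapFn, if_pos hi, hν, Sum.elim_inl, Sum.elim_inr]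
        exact (hident i).map_eq
      · simp [swapFn, hi]
  -- the swap maps on the function space preserve π
  have hmT : ∀ C : Finset (Fin n),
      Measurable (fun y : (Fin n ⊕ Fin n) → ℝ => (fun j => y (swapFn n C j))) :=
    fun C => measurable_pi_lambda _ fun j => measurable_pi_apply _
  have hTpres : ∀ C : Finset (Fin n),
      Measure.map (fun y : (Fin n ⊕ Fin n) → ℝ => (fun j => y (swapFn n C j))) π = π := by
    intro C
    rw [hπ]
    refine (Measure.pi_eq fun s hs => ?_).symm
    rw [Measure.map_apply (hmT C) (MeasurableSet.univ_pi hs)]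
    have hpre : (fun y : (Fin n ⊕ Fin n) → ℝ => (fun j => y (swapFn n C j))) ⁻¹'
        (Set.univ.pi s) = Set.univ.pi (fun j => s (swapFn n C j)) := by
      ext y
      simp only [Set.mem_preimage, Set.mem_pi, Set.mem_univ, true_implies]
      constructor
      · intro hy j
        have := hy (swapFn n C j)
        rwa [swapFn_invol] at this
      · intro hy j
        have := hy (swapFn n C j)
        rwa [swapFn_invol] at this
    rw [hpre, Measure.pi_pi]
    calc ∏ j, ν j (s (swapFn n C j))
        = ∏ j, ν (swapFn n C j) (s (swapFn n C j)) :=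
          Finset.prod_congr rfl fun j _ => by rw [hνswap]
      _ = ∏ j, ν j (s j) := (swapEquiv n C).prod_comp (fun j => ν j (s j))
  -- integral transfer along the swap maps
  have hTint : ∀ (C : Finset (Fin n)) (g : ((Fin n ⊕ Fin n) → ℝ) → ℝ), Measurable g →
      ∫ y, g y ∂π = ∫ y, g (fun j => y (swapFn n C j)) ∂π := by
    intro C g hg
    conv_lhs => rw [← hTpres C]
    rw [integral_map (hmT C).aemeasurable hg.aestronglyMeasurable]
  have hsd0 : ∀ A : Finset (Fin n), symmDiff (∅ : Finset (Fin n)) A = A := by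
    intro A; ext j; simp [Finset.mem_symmDiff]
  have hmsel : ∀ A : Finset (Fin n), Measurable (fun y => f (sel n A y)) :=
    fun A => hf.comp (measurable_sel n A)
  -- membership in L²
  have hg2 : ∀ A : Finset (Fin n), MemLp (fun y => f (sel n A y)) 2 π := by
    have hsel0 : ∀ ω, sel n ∅ (bigvec ω) = fun i => X i ω := by
      intro ω; funext i; simp [sel, hbigvec]
    have h0 : MemLp (fun y => f (sel n ∅ y)) 2 π := by
      rw [← hmap]
      refine (memLp_map_measure_iff (hf.comp (measurable_sel n ∅)).aestronglyMeasurable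
        hmbig.aemeasurable).2 ?_
      have hcb : ((f ∘ sel n ∅) ∘ bigvec) = fun ω => f (fun i => X i ω) := by
        funext ω
        simp only [Function.comp_apply]
        rw [hsel0]
      rw [hcb]
      exact hL2
    intro A
    have hcomp : (fun y => f (sel n A y))
        = ((fun y => f (sel n ∅ y)) ∘ (fun y : (Fin n ⊕ Fin n) → ℝ =>
            (fun j => y (swapFn n A j)))) := by
      funext y
      simp only [Function.comp_apply]
      rw [sel_swapFn, hsd0]
    rw [hcomp]
    refine (memLp_map_measure_iff (hf.comp (measurable_sel n ∅)).aestronglyMeasurable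
      (hmT A).aemeasurable).1 ?_
    rw [hTpres A]
    exact h0
  -- integrability of products
  have hmul : ∀ A B : Finset (Fin n),
      Integrable (fun y => f (sel n A y) * f (sel n B y)) π := by
    intro A B
    rw [← memLp_one_iff_integrable]
    have hpqr : (1 : ℝ≥0∞) / 1 = 1 / 2 + 1 / 2 := by
      rw [ENNReal.div_add_div_same, one_add_one_eq_two, div_one]
      exact (ENNReal.div_self (by norm_num) (by norm_num)).symm
    have := (hg2 B).smul (hg2 A) (r := 1)
    simpa only [smul_eq_mul, Pi.smul_apply', Pi.mul_def] using this
  have hd : ∀ A B C D : Finset (Fin n),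
      Integrable (fun y => f (sel n A y) * f (sel n B y)
        - f (sel n C y) * f (sel n D y)) π :=
    fun A B C D => (hmul A B).sub (hmul C D)
  -- abbreviation for the basic second moments
  set J : Finset (Fin n) → Finset (Fin n) → ℝ :=
    fun A B => ∫ y, f (sel n A y) * f (sel n B y) ∂π with hJ
  -- exchangeability
  have hswap : ∀ C A B : Finset (Fin n), J A B = J (symmDiff A C) (symmDiff B C) := by
    intro C A B
    calc J A B
        = ∫ y, (fun y => f (sel n A y) * f (sel n B y))
            (fun j => y (swapFn n C j)) ∂π :=
          hTint C _ ((hmsel A).mul (hmsel B))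
      _ = J (symmDiff A C) (symmDiff B C) := by
          refine integral_congr_ae (Filter.Eventually.of_forall fun y => ?_)
          simp only [sel_swapFn]
  -- conversion of μ-integrals to π-integrals
  have hconv : ∀ (g : ((Fin n ⊕ Fin n) → ℝ) → ℝ), Measurable g →
      ∫ ω, g (bigvec ω) ∂μ = ∫ y, g y ∂π := by
    intro g hg
    rw [← hmap, integral_map hmbig.aemeasurable hg.aestronglyMeasurable]
  have hpv : ∀ (A : Finset (Fin n)) (ω : Ω), perturbedVec n X X' A ω = sel n A (bigvec ω) := by
    intro A ω; funext i
    by_cases hi : i ∈ A <;> simp [perturbedVec, sel, hbigvec, hi]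
  -- symmetric difference computations
  have hsd1 : ∀ i : Fin n, symmDiff ({i} : Finset (Fin n)) {i} = ∅ := by
    intro i; simp [symmDiff_self]
  have hsd2 : ∀ (i : Fin n) (A : Finset (Fin n)), i ∉ A →
      symmDiff A {i} = insert i A := by
    intro i A hiA
    ext j
    by_cases hj : j = i <;> simp [Finset.mem_symmDiff, hj, hiA]
  have hsd3 : ∀ (i : Fin n) (A : Finset (Fin n)), i ∉ A →
      symmDiff (insert i A) {i} = A := by
    intro i A hiA
    ext j
    by_cases hj : j = i <;> simp [Finset.mem_symmDiff, hj, hiA]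
  -- the per-term identity
  have hE : ∀ (i : Fin n) (A : Finset (Fin n)), i ∉ A →
      ∫ y, (f (sel n ∅ y) - f (sel n {i} y))
          * (f (sel n A y) - f (sel n (insert i A) y)) ∂π
        = 2 * (J ∅ A - J ∅ (insert i A)) := by
    intro i A hiA
    have expand : (fun y => (f (sel n ∅ y) - f (sel n {i} y))
          * (f (sel n A y) - f (sel n (insert i A) y)))
        = fun y => (f (sel n ∅ y) * f (sel n A y)
            - f (sel n ∅ y) * f (sel n (insert i A) y))
          - (f (sel n {i} y) * f (sel n A y)
            - f (sel n {i} y) * f (sel n (insert i A) y)) := by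
      funext y; ring
    rw [expand, integral_sub (hd ∅ A ∅ (insert i A)) (hd {i} A {i} (insert i A)),
      integral_sub (hmul ∅ A) (hmul ∅ (insert i A)),
      integral_sub (hmul {i} A) (hmul {i} (insert i A))]
    have e1 : J {i} A = J ∅ (insert i A) := by
      rw [hswap {i} {i} A, hsd1 i, hsd2 i A hiA]
    have e2 : J {i} (insert i A) = J ∅ A := by
      rw [hswap {i} {i} (insert i A), hsd1 i, hsd3 i A hiA]
    have hJ1 : ∫ y, f (sel n ∅ y) * f (sel n A y) ∂π = J ∅ A := rfl
    have hJ2 : ∫ y, f (sel n ∅ y) * f (sel n (insert i A) y) ∂π = J ∅ (insert i A) := rfl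
    have hJ3 : ∫ y, f (sel n {i} y) * f (sel n A y) ∂π = J {i} A := rfl
    have hJ4 : ∫ y, f (sel n {i} y) * f (sel n (insert i A) y) ∂π = J {i} (insert i A) := rfl
    rw [hJ1, hJ2, hJ3, hJ4, e1, e2]
    ring
  -- rewrite each integral appearing in the RHS
  have hRHSterm : ∀ (k : ℕ) (i : Fin n), ∀ A ∈ Finset.powersetCard k (Finset.univ.erase i),
      (∫ ω, (f (perturbedVec n X X' ∅ ω) - f (perturbedVec n X X' {i} ω))
          * (f (perturbedVec n X X' A ω) - f (perturbedVec n X X' (insert i A) ω)) ∂μ)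
        = 2 * (J ∅ A - J ∅ (insert i A)) := by
    intro k i A hA
    have hiA : i ∉ A := by
      simp only [Finset.mem_powersetCard, Finset.subset_erase] at hA
      exact hA.1.2
    have hg : Measurable (fun y => (f (sel n ∅ y) - f (sel n {i} y))
        * (f (sel n A y) - f (sel n (insert i A) y))) :=
      ((hf.comp (measurable_sel n ∅)).sub (hf.comp (measurable_sel n {i}))).mul
        ((hf.comp (measurable_sel n A)).sub (hf.comp (measurable_sel n (insert i A))))
    calc ∫ ω, (f (perturbedVec n X X' ∅ ω) - f (perturbedVec n X X' {i} ω))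
          * (f (perturbedVec n X X' A ω) - f (perturbedVec n X X' (insert i A) ω)) ∂μ
        = ∫ ω, (fun y => (f (sel n ∅ y) - f (sel n {i} y))
            * (f (sel n A y) - f (sel n (insert i A) y))) (bigvec ω) ∂μ := by
          refine integral_congr_ae (Filter.Eventually.of_forall fun ω => ?_)
          simp only [hpv]
      _ = ∫ y, (f (sel n ∅ y) - f (sel n {i} y))
            * (f (sel n A y) - f (sel n (insert i A) y)) ∂π := hconv _ hg
      _ = 2 * (J ∅ A - J ∅ (insert i A)) := hE i A hiA
  -- the key summation identity
  have hkey : ∑ k ∈ Finset.range n, ∑ i : Fin n,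
      ((Nat.choose (n - 1) k : ℝ))⁻¹ *
        ∑ A ∈ Finset.powersetCard k (Finset.univ.erase i), (J ∅ A - J ∅ (insert i A))
      = (n : ℝ) * (J ∅ ∅ - J ∅ Finset.univ) := by
    -- write each inner term as a π-integral and apply the telescoping identity pointwise
    have hterm : ∀ (k : ℕ) (i : Fin n),
        ((Nat.choose (n - 1) k : ℝ))⁻¹ *
          ∑ A ∈ Finset.powersetCard k (Finset.univ.erase i), (J ∅ A - J ∅ (insert i A))
        = ∫ y, ((Nat.choose (n - 1) k : ℝ))⁻¹ *
            ∑ A ∈ Finset.powersetCard k (Finset.univ.erase i),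
              (f (sel n ∅ y) * f (sel n A y) - f (sel n ∅ y) * f (sel n (insert i A) y)) ∂π := by
      intro k i
      rw [integral_const_mul]
      congr 1
      rw [integral_finset_sum _ (fun A _ => hd ∅ A ∅ (insert i A))]
      exact Finset.sum_congr rfl fun A _ =>
        (integral_sub (hmul ∅ A) (hmul ∅ (insert i A))).symm
    have hintegrand : ∀ (k : ℕ) (i : Fin n),
        Integrable (fun y => ((Nat.choose (n - 1) k : ℝ))⁻¹ *
          ∑ A ∈ Finset.powersetCard k (Finset.univ.erase i),
            (f (sel n ∅ y) * f (sel n A y) - f (sel n ∅ y) * f (sel n (insert i A) y))) π := by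
      intro k i
      exact (integrable_finset_sum _
        (fun A _ => hd ∅ A ∅ (insert i A))).const_mul _
    calc ∑ k ∈ Finset.range n, ∑ i : Fin n,
        ((Nat.choose (n - 1) k : ℝ))⁻¹ *
          ∑ A ∈ Finset.powersetCard k (Finset.univ.erase i), (J ∅ A - J ∅ (insert i A))
        = ∑ k ∈ Finset.range n, ∑ i : Fin n,
            ∫ y, ((Nat.choose (n - 1) k : ℝ))⁻¹ *
              ∑ A ∈ Finset.powersetCard k (Finset.univ.erase i),
                (f (sel n ∅ y) * f (sel n A y)
                  - f (sel n ∅ y) * f (sel n (insert i A) y)) ∂π := by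
          exact Finset.sum_congr rfl fun k _ =>
            Finset.sum_congr rfl fun i _ => hterm k i
      _ = ∫ y, ∑ k ∈ Finset.range n, ∑ i : Fin n,
            ((Nat.choose (n - 1) k : ℝ))⁻¹ *
              ∑ A ∈ Finset.powersetCard k (Finset.univ.erase i),
                (f (sel n ∅ y) * f (sel n A y)
                  - f (sel n ∅ y) * f (sel n (insert i A) y)) ∂π := by
          rw [integral_finset_sum _ (fun k _ => integrable_finset_sum _
            (fun i _ => hintegrand k i))]
          exact Finset.sum_congr rfl fun k _ =>
            (integral_finset_sum _ (fun i _ => hintegrand k i)).symm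
      _ = ∫ y, (n : ℝ) * (f (sel n ∅ y) * f (sel n ∅ y)
            - f (sel n ∅ y) * f (sel n Finset.univ y)) ∂π := by
          refine integral_congr_ae (Filter.Eventually.of_forall fun y => ?_)
          exact telescope hn (fun B => f (sel n ∅ y) * f (sel n B y))
      _ = (n : ℝ) * (J ∅ ∅ - J ∅ Finset.univ) := by
          rw [integral_const_mul, integral_sub (hmul ∅ ∅) (hmul ∅ Finset.univ)]

  -- identify the LHS: second moment and squared mean
  have hsel0 : ∀ ω, sel n ∅ (bigvec ω) = fun i => X i ω := by
    intro ω; funext i; simp [sel, hbigvec]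
  have hsq : ∫ ω, (f (fun i => X i ω)) ^ 2 ∂μ = J ∅ ∅ := by
    calc ∫ ω, (f (fun i => X i ω)) ^ 2 ∂μ
        = ∫ ω, (fun y => f (sel n ∅ y) * f (sel n ∅ y)) (bigvec ω) ∂μ := by
          refine integral_congr_ae (Filter.Eventually.of_forall fun ω => ?_)
          simp only [hsel0, sq]
      _ = J ∅ ∅ := hconv _ ((hf.comp (measurable_sel n ∅)).mul (hf.comp (measurable_sel n ∅)))
  have hmean : ∫ ω, f (fun i => X i ω) ∂μ = ∫ y, f (sel n ∅ y) ∂π := by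
    calc ∫ ω, f (fun i => X i ω) ∂μ
        = ∫ ω, (fun y => f (sel n ∅ y)) (bigvec ω) ∂μ := by
          refine integral_congr_ae (Filter.Eventually.of_forall fun ω => ?_)
          simp only [hsel0]
      _ = ∫ y, f (sel n ∅ y) ∂π := hconv _ (hf.comp (measurable_sel n ∅))
  -- independence: J ∅ univ = (mean)²
  have hmeanuniv : ∫ y, f (sel n Finset.univ y) ∂π = ∫ y, f (sel n ∅ y) ∂π := by
    calc ∫ y, f (sel n Finset.univ y) ∂π
        = ∫ y, (fun y => f (sel n ∅ y)) (fun j => y (swapFn n Finset.univ j)) ∂π := by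
          refine integral_congr_ae (Filter.Eventually.of_forall fun y => ?_)
          simp only [sel_swapFn, hsd0]
      _ = ∫ y, f (sel n ∅ y) ∂π := (hTint Finset.univ _ (hmsel ∅)).symm
  have hindep2 : J ∅ Finset.univ = (∫ y, f (sel n ∅ y) ∂π) ^ 2 := by
    set e := MeasurableEquiv.sumPiEquivProdPi (fun _ : Fin n ⊕ Fin n => ℝ) with he
    have hpres := MeasureTheory.measurePreserving_sumPiEquivProdPi ν
    have hsel_fst : ∀ y : (Fin n ⊕ Fin n) → ℝ, sel n ∅ y = (e y).1 := by
      intro y; funext i; simp [sel, he, MeasurableEquiv.sumPiEquivProdPi,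
        Equiv.sumPiEquivProdPi]
    have hsel_snd : ∀ y : (Fin n ⊕ Fin n) → ℝ, sel n Finset.univ y = (e y).2 := by
      intro y; funext i; simp [sel, he, MeasurableEquiv.sumPiEquivProdPi,
        Equiv.sumPiEquivProdPi]
    set π1 : Measure (Fin n → ℝ) := Measure.pi (fun i : Fin n => ν (Sum.inl i)) with hπ1
    set π2 : Measure (Fin n → ℝ) := Measure.pi (fun i : Fin n => ν (Sum.inr i)) with hπ2
    haveI : IsProbabilityMeasure π1 := by rw [hπ1]; infer_instance
    haveI : IsProbabilityMeasure π2 := by rw [hπ2]; infer_instance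
    have key1 : J ∅ Finset.univ = (∫ x, f x ∂π1) * ∫ x, f x ∂π2 := by
      calc J ∅ Finset.univ
          = ∫ y, (fun p : (Fin n → ℝ) × (Fin n → ℝ) => f p.1 * f p.2) (e y) ∂π := by
            refine integral_congr_ae (Filter.Eventually.of_forall fun y => ?_)
            show f (sel n ∅ y) * f (sel n Finset.univ y) = _
            rw [hsel_fst y, hsel_snd y]
        _ = ∫ p, f p.1 * f p.2 ∂(π1.prod π2) := hpres.integral_comp' (fun p : (Fin n → ℝ) × (Fin n → ℝ) => f p.1 * f p.2)
        _ = (∫ x, f x ∂π1) * ∫ x, f x ∂π2 := integral_prod_mul f f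
    have key2 : ∫ y, f (sel n ∅ y) ∂π = ∫ x, f x ∂π1 := by
      calc ∫ y, f (sel n ∅ y) ∂π
          = ∫ y, (fun p : (Fin n → ℝ) × (Fin n → ℝ) => f p.1 * 1) (e y) ∂π := by
            refine integral_congr_ae (Filter.Eventually.of_forall fun y => ?_)
            simp only [mul_one]
            exact congrArg f (hsel_fst y)
        _ = ∫ p, f p.1 * 1 ∂(π1.prod π2) :=
          hpres.integral_comp' (fun p : (Fin n → ℝ) × (Fin n → ℝ) => f p.1 * 1)
        _ = (∫ x, f x ∂π1) * ∫ x, (1:ℝ) ∂π2 :=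
          integral_prod_mul f (fun _ : Fin n → ℝ => (1:ℝ))
        _ = ∫ x, f x ∂π1 := by simp
    have key3 : ∫ y, f (sel n Finset.univ y) ∂π = ∫ x, f x ∂π2 := by
      calc ∫ y, f (sel n Finset.univ y) ∂π
          = ∫ y, (fun p : (Fin n → ℝ) × (Fin n → ℝ) => 1 * f p.2) (e y) ∂π := by
            refine integral_congr_ae (Filter.Eventually.of_forall fun y => ?_)
            simp only [one_mul]
            exact congrArg f (hsel_snd y)
        _ = ∫ p, (1:ℝ) * f p.2 ∂(π1.prod π2) :=
          hpres.integral_comp' (fun p : (Fin n → ℝ) × (Fin n → ℝ) => 1 * f p.2)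
        _ = (∫ x, (1:ℝ) ∂π1) * ∫ x, f x ∂π2 :=
          integral_prod_mul (fun _ : Fin n → ℝ => (1:ℝ)) f
        _ = ∫ x, f x ∂π2 := by simp
    rw [key1, ← key2, ← key3, hmeanuniv, sq]
  -- put everything together
  have hRHS : ∑ k ∈ Finset.range n, ∑ i : Fin n,
      ((Nat.choose (n - 1) k : ℝ))⁻¹ *
        ∑ A ∈ Finset.powersetCard k (Finset.univ.erase i),
          ∫ ω, (f (perturbedVec n X X' ∅ ω) - f (perturbedVec n X X' {i} ω))
            * (f (perturbedVec n X X' A ω) - f (perturbedVec n X X' (insert i A) ω)) ∂μ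
      = 2 * ((n : ℝ) * (J ∅ ∅ - J ∅ Finset.univ)) := by
    rw [← hkey, Finset.mul_sum]
    refine Finset.sum_congr rfl fun k _ => ?_
    rw [Finset.mul_sum]
    refine Finset.sum_congr rfl fun i _ => ?_
    rw [Finset.sum_congr rfl (hRHSterm k i), Finset.mul_sum, Finset.mul_sum, Finset.mul_sum]
    refine Finset.sum_congr rfl fun A _ => ?_
    ring
  rw [hsq, hmean, ← hindep2, hRHS]
  have hn' : (n : ℝ) ≠ 0 := Nat.cast_ne_zero.2 hn.ne'
  field_simp
end
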